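/- Let K = ℚ(√d) with d a negative squarefree integer, let m ∈ ℤ, let k be a positive integer, and let s ∈ ℂ with Re(s) > 1. Then both series below converge absolutely and (Σ_{n=1}^∞ χ_k(n) n^{−2s}) · (Σ_{α ∈ V} (α/ᾱ)^m χ_k(α) N(α)^{−s}) = Σ_{γ ∈ O, γ ≠ 0} (γ/γ̄)^m χ_k(γ) N(γ)^{−s}. -/

import Mathlib

open MeasureTheory

/-- √d as a complex number: positive real square root for d ≥ 0, and
    i·√|d| (positive imaginary part) for d < 0. -/
noncomputable def sqrtd (d : ℤ) : ℂ :=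
  if 0 ≤ d then ((Real.sqrt d : ℝ) : ℂ) else Complex.I * ((Real.sqrt (-d) : ℝ) : ℂ)

/-- ω = √d if d ≡ 2,3 mod 4 and ω = (1+√d)/2 if d ≡ 1 mod 4. -/
noncomputable def omg (d : ℤ) : ℂ :=
  if d % 4 = 1 then (1 + sqrtd d) / 2 else sqrtd d

/-- The conjugate ω̄ of ω. -/
noncomputable def omgBar (d : ℤ) : ℂ :=
  if d % 4 = 1 then (1 - sqrtd d) / 2 else -sqrtd d

/-- The element a + bω of O = ℤ ⊕ ℤω. -/
noncomputable def elt (d a b : ℤ) : ℂ := (a : ℂ) + (b : ℂ) * omg d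

/-- The conjugate a + bω̄ of a + bω. -/
noncomputable def eltBar (d a b : ℤ) : ℂ := (a : ℂ) + (b : ℂ) * omgBar d

/-- The norm N(a + bω) = (a+bω)(a+bω̄) as a rational integer. -/
def Nrm (d a b : ℤ) : ℤ :=
  if d % 4 = 1 then a ^ 2 + a * b + b ^ 2 * ((1 - d) / 4) else a ^ 2 - d * b ^ 2

/-- Membership in the ring of integers O = ℤ ⊕ ℤω. -/
def InO (d : ℤ) (z : ℂ) : Prop := ∃ a b : ℤ, z = elt d a b

/-- z is a unit of the ring O. -/
def IsUnitO (d : ℤ) (z : ℂ) : Prop := InO d z ∧ ∃ y : ℂ, InO d y ∧ z * y = 1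

/-- z is a visible point: z = a + bω with gcd(a,b) = 1. -/
def Visible (d : ℤ) (z : ℂ) : Prop := ∃ a b : ℤ, Int.gcd a b = 1 ∧ z = elt d a b

/-- γ ∼ γ' : there are a unit υ and positive integers m, n with υmγ' = nγ. -/
def Sim (d : ℤ) (γ γ' : ℂ) : Prop :=
  ∃ υ : ℂ, IsUnitO d υ ∧ ∃ m n : ℕ, 0 < m ∧ 0 < n ∧ υ * (m : ℂ) * γ' = (n : ℂ) * γ

/-- The set N of elements of K = ℚ(√d) of norm 1. -/
noncomputable def NormOne (d : ℤ) : Set ℂ :=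
  {z | ∃ a b : ℚ, z = (a : ℂ) + (b : ℂ) * sqrtd d ∧ a ^ 2 - (d : ℚ) * b ^ 2 = 1}

lemma sqrtd_sq (d : ℤ) : (sqrtd d) ^ 2 = (d : ℂ) := by
  unfold sqrtd
  split_ifs with h
  · rw [← Complex.ofReal_pow, Real.sq_sqrt (by exact_mod_cast h)]; norm_cast
  · push_neg at h
    rw [mul_pow, Complex.I_sq, ← Complex.ofReal_pow,
      Real.sq_sqrt (by exact_mod_cast (by omega : (0:ℤ) ≤ -d))]
    push_cast; ring

lemma elt_mul_eltBar (d a b : ℤ) :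
    elt d a b * eltBar d a b = (Nrm d a b : ℂ) := by
  have hsq := sqrtd_sq d
  unfold elt eltBar omg omgBar Nrm
  split_ifs with h
  · have h4 : (4:ℤ) ∣ 1 - d := by omega
    have hc : (((1 - d) / 4 : ℤ) : ℂ) * 4 = 1 - (d:ℂ) := by
      exact_mod_cast congrArg (fun x : ℤ => (x:ℂ)) (Int.ediv_mul_cancel h4)
    push_cast
    linear_combination (-(b:ℂ)^2/4) * hsq - ((b:ℂ)^2/4) * hc
  · push_cast
    linear_combination (-(b:ℂ)^2) * hsq

lemma eltBar_eq_conj (d a b : ℤ) (hd : d < 0) :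
    eltBar d a b = (starRingEnd ℂ) (elt d a b) := by
  have hsd : (starRingEnd ℂ) (sqrtd d) = - sqrtd d := by
    unfold sqrtd
    rw [if_neg (by omega)]
    simp [Complex.conj_I]
  unfold elt eltBar omg omgBar
  split_ifs with h <;> simp [map_div₀, hsd, Complex.conj_ofNat] <;> tauto


lemma Nrm_bound (d a b : ℤ) (hd : d < 0) (h : ¬(a = 0 ∧ b = 0)) :
    0 < Nrm d a b ∧ a ^ 2 + b ^ 2 ≤ 2 * Nrm d a b := by
  have hab : 1 ≤ a ^ 2 + b ^ 2 := by
    rcases (by tauto : a ≠ 0 ∨ b ≠ 0) with h'|h'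
    · nlinarith [(by positivity : (0:ℤ) < a ^ 2), sq_nonneg b]
    · nlinarith [(by positivity : (0:ℤ) < b ^ 2), sq_nonneg a]
  unfold Nrm
  split_ifs with h4
  · have he1 : 1 ≤ (1 - d) / 4 := by omega
    have hle : a ^ 2 + b ^ 2 ≤ 2 * (a ^ 2 + a * b + b ^ 2 * ((1 - d) / 4)) := by
      nlinarith [sq_nonneg (a + b), sq_nonneg b]
    exact ⟨by linarith, hle⟩
  · have hle : a ^ 2 + b ^ 2 ≤ 2 * (a ^ 2 - d * b ^ 2) := by
      nlinarith [sq_nonneg a, mul_nonneg (sq_nonneg b) (by omega : (0:ℤ) ≤ -2 * d - 1)]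
    exact ⟨by linarith, hle⟩

lemma Nrm_mul (d g a b : ℤ) : Nrm d (g * a) (g * b) = g ^ 2 * Nrm d a b := by
  unfold Nrm; split_ifs <;> ring

lemma elt_mul (d g a b : ℤ) : elt d (g * a) (g * b) = (g : ℂ) * elt d a b := by
  unfold elt; push_cast; ring

lemma eltBar_mul (d g a b : ℤ) : eltBar d (g * a) (g * b) = (g : ℂ) * eltBar d a b := by
  unfold eltBar; push_cast; ring

lemma gcd_sq_mul (g N k : ℤ) : Int.gcd (g ^ 2 * N) k = 1 ↔ (Int.gcd g k = 1 ∧ Int.gcd N k = 1) := by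
  rw [← Int.isCoprime_iff_gcd_eq_one, ← Int.isCoprime_iff_gcd_eq_one, ← Int.isCoprime_iff_gcd_eq_one,
    IsCoprime.mul_left_iff, IsCoprime.pow_left_iff (by norm_num)]

lemma cpow_sq_mul (g N : ℤ) (hg : 0 < g) (hN : 0 < N) (s : ℂ) :
    ((g ^ 2 * N : ℤ) : ℂ) ^ (-s) = (g : ℂ) ^ (-(2 * s)) * ((N : ℤ) : ℂ) ^ (-s) := by
  obtain ⟨n, rfl⟩ : ∃ n : ℕ, g = (n : ℤ) := ⟨g.toNat, (Int.toNat_of_nonneg hg.le).symm⟩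
  have h1 : (((n : ℤ) ^ 2 * N : ℤ) : ℂ) = ((((n : ℝ) ^ 2) : ℝ) : ℂ) * (((N : ℝ) : ℝ) : ℂ) := by
    push_cast; ring
  rw [h1, Complex.mul_cpow_ofReal_nonneg (by positivity) (by positivity)]
  have h2 : -(2 * s) = ((2 : ℕ) : ℂ) * (-s) := by push_cast; ring
  have h3 : (((n : ℤ)) : ℂ) = ((n : ℕ) : ℂ) := by norm_cast
  rw [h3, h2, Complex.natCast_cpow_natCast_mul]
  congr 2
  push_cast; ring

lemma elt_ne_zero (d a b : ℤ) (hd : d < 0) (h : ¬(a = 0 ∧ b = 0)) : elt d a b ≠ 0 := by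
  intro h0
  have := elt_mul_eltBar d a b
  rw [h0, zero_mul] at this
  have hN := (Nrm_bound d a b hd h).1
  have : (Nrm d a b : ℂ) = 0 := this.symm
  rw [Int.cast_eq_zero] at this
  omega

lemma eltBar_ne_zero (d a b : ℤ) (hd : d < 0) (h : ¬(a = 0 ∧ b = 0)) : eltBar d a b ≠ 0 := by
  rw [eltBar_eq_conj d a b hd]
  simpa using elt_ne_zero d a b hd h

lemma norm_ratio (d a b : ℤ) (hd : d < 0) (h : ¬(a = 0 ∧ b = 0)) (m : ℤ) :
    ‖(elt d a b / eltBar d a b) ^ m‖ = 1 := by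
  rw [norm_zpow, norm_div, eltBar_eq_conj d a b hd, RCLike.norm_conj,
    div_self (by simpa using elt_ne_zero d a b hd h)]
  simp

/-- The generic summand. -/
noncomputable def trm (d : ℤ) (k : ℕ) (m : ℤ) (s : ℂ) (p : ℤ × ℤ) : ℂ :=
  (elt d p.1 p.2 / eltBar d p.1 p.2) ^ m *
    (if Int.gcd (Nrm d p.1 p.2) k = 1 then (1 : ℂ) else 0) *
    ((Nrm d p.1 p.2 : ℂ)) ^ (-s)

lemma trm_mul (d : ℤ) (hd : d < 0) (k : ℕ) (m : ℤ) (s : ℂ) (g : ℕ+) (a b : ℤ)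
    (hab : ¬(a = 0 ∧ b = 0)) :
    trm d k m s ((g : ℤ) * a, (g : ℤ) * b) =
      ((if Nat.gcd (g : ℕ) k = 1 then (1 : ℂ) else 0) * ((g : ℕ) : ℂ) ^ (-(2 * s))) *
        trm d k m s (a, b) := by
  have hg0 : ((g : ℤ) : ℂ) ≠ 0 := by
    simp [PNat.ne_zero]
  have hN := (Nrm_bound d a b hd hab).1
  unfold trm
  simp only
  rw [elt_mul, eltBar_mul, mul_div_mul_left _ _ hg0, Nrm_mul,
    cpow_sq_mul _ _ (by exact_mod_cast g.pos) hN]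
  have hiff : Int.gcd ((g:ℤ) ^ 2 * Nrm d a b) k = 1 ↔
      (Nat.gcd (g : ℕ) k = 1 ∧ Int.gcd (Nrm d a b) k = 1) := by
    rw [gcd_sq_mul]
    have : Int.gcd ((g:ℕ) : ℤ) ((k:ℕ) : ℤ) = Nat.gcd (g:ℕ) k := Int.gcd_natCast_natCast _ _
    rw [this]
  by_cases h1 : Nat.gcd (g : ℕ) k = 1 <;> by_cases h2 : Int.gcd (Nrm d a b) k = 1 <;>
    simp [hiff, h1, h2] <;> push_cast <;> ring

lemma norm_trm_le (d : ℤ) (hd : d < 0) (k : ℕ) (m : ℤ) (s : ℂ) (hs : 0 < s.re)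
    (a b : ℤ) (hab : ¬(a = 0 ∧ b = 0)) :
    ‖trm d k m s (a, b)‖ ≤ 2 ^ s.re * ‖![a, b]‖ ^ (-(2 * s.re)) := by
  obtain ⟨hN, hN2⟩ := Nrm_bound d a b hd hab
  set σ := s.re with hσ
  have hMdef : ‖![a, b]‖ = (max a.natAbs b.natAbs : ℝ) := by
    rw [EisensteinSeries.norm_eq_max_natAbs]; simp
  set Mn : ℕ := max a.natAbs b.natAbs with hMn
  have hM1 : 1 ≤ (Mn : ℝ) := by
    have : 1 ≤ Mn := by
      rcases (by tauto : a ≠ 0 ∨ b ≠ 0) with h'|h' <;> simp [hMn] <;> omega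
    exact_mod_cast this
  have hMpos : (0:ℝ) < (Mn:ℝ) := by linarith
  have hMsq : ((Mn:ℝ)) ^ (2:ℕ) ≤ 2 * (Nrm d a b : ℝ) := by
    have h1 : (Mn:ℤ) ^ 2 ≤ a ^ 2 + b ^ 2 := by
      rcases le_total a.natAbs b.natAbs with h'|h' <;> simp [hMn, h'] <;>
        nlinarith [Int.natAbs_sq a, Int.natAbs_sq b, sq_nonneg a, sq_nonneg b,
          sq_nonneg ((b.natAbs : ℤ)), sq_nonneg ((a.natAbs : ℤ))]
    have := hN2
    push_cast
    have h2 : ((Mn:ℤ):ℝ) ^ 2 ≤ ((a:ℝ)) ^ 2 + (b:ℝ) ^ 2 := by exact_mod_cast h1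
    push_cast at h2
    have h3 : ((a:ℝ)) ^ 2 + (b:ℝ) ^ 2 ≤ 2 * (Nrm d a b : ℝ) := by exact_mod_cast hN2
    linarith
  -- norm of the term
  have hNpos : (0:ℝ) < (Nrm d a b : ℝ) := by exact_mod_cast hN
  have hnorm : ‖trm d k m s (a, b)‖ ≤ (Nrm d a b : ℝ) ^ (-σ) := by
    unfold trm
    simp only
    rw [norm_mul, norm_mul, norm_ratio d a b hd hab, one_mul]
    have hcp : ‖((Nrm d a b : ℤ) : ℂ) ^ (-s)‖ = (Nrm d a b : ℝ) ^ (-σ) := by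
      have : ((Nrm d a b : ℤ) : ℂ) = (((Nrm d a b : ℝ)) : ℂ) := by push_cast; ring
      rw [this, Complex.norm_cpow_eq_rpow_re_of_pos hNpos, Complex.neg_re]
    rw [hcp]
    have : ‖(if Int.gcd (Nrm d a b) k = 1 then (1:ℂ) else 0)‖ ≤ 1 := by
      split_ifs <;> simp
    nlinarith [Real.rpow_pos_of_pos hNpos (-σ)]
  refine hnorm.trans ?_
  -- (N)^(-σ) ≤ 2^σ * M^(-2σ)
  have key : ((Mn:ℝ) ^ (2:ℕ)) ^ σ ≤ 2 ^ σ * (Nrm d a b : ℝ) ^ σ := by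
    rw [← Real.mul_rpow (by norm_num) hNpos.le]
    exact Real.rpow_le_rpow (by positivity) hMsq hs.le
  have hMr : ‖![a, b]‖ ^ (-(2 * σ)) = (((Mn:ℝ) ^ (2:ℕ)) ^ σ)⁻¹ := by
    rw [hMdef]
    have : ((a.natAbs : ℝ) ⊔ (b.natAbs : ℝ)) = (Mn : ℝ) := by rw [hMn]; push_cast; rfl
    rw [this, ← Real.rpow_natCast (Mn:ℝ) 2, ← Real.rpow_mul hMpos.le, ← Real.rpow_neg hMpos.le]
    norm_num
  rw [hMr, Real.rpow_neg hNpos.le]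
  have h2 : (0:ℝ) < (Nrm d a b : ℝ) ^ σ := Real.rpow_pos_of_pos hNpos σ
  have h3 : (0:ℝ) < ((Mn:ℝ) ^ (2:ℕ)) ^ σ := by positivity
  rw [← div_eq_mul_inv, le_div_iff₀ h3, inv_mul_eq_div, div_le_iff₀ h2]
  linarith [key]

lemma coprime_ne_zero {a b : ℤ} (h : Int.gcd a b = 1) : ¬(a = 0 ∧ b = 0) := by
  rintro ⟨rfl, rfl⟩; simp at h

lemma pair_ne_zero {p : ℤ × ℤ} (h : Int.gcd p.1 p.2 = 1) : p ≠ (0, 0) := by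
  intro hc; rw [hc] at h; simp at h

def pairEquiv : (ℕ+ × {p : ℤ × ℤ // Int.gcd p.1 p.2 = 1}) ≃ {p : ℤ × ℤ // p ≠ (0, 0)} where
  toFun x := ⟨((x.1 : ℤ) * x.2.1.1, (x.1 : ℤ) * x.2.1.2), by
    intro h0
    rw [Prod.mk.injEq] at h0
    have hg : (x.1 : ℤ) ≠ 0 := by exact_mod_cast x.1.ne_zero
    have h1 : x.2.1.1 = 0 := (mul_eq_zero.1 h0.1).resolve_left hg
    have h2 : x.2.1.2 = 0 := (mul_eq_zero.1 h0.2).resolve_left hg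
    exact coprime_ne_zero x.2.2 ⟨h1, h2⟩⟩
  invFun y :=
    (⟨Int.gcd y.1.1 y.1.2, Int.gcd_pos_iff.2 (by
        rcases y with ⟨⟨a, b⟩, h⟩
        by_contra hc
        push_neg at hc
        exact h (Prod.ext hc.1 hc.2))⟩,
     ⟨(y.1.1 / Int.gcd y.1.1 y.1.2, y.1.2 / Int.gcd y.1.1 y.1.2), by
        rcases y with ⟨⟨a, b⟩, h⟩
        exact Int.gcd_div_gcd_div_gcd (Int.gcd_pos_iff.2 (by
          by_contra hc
          push_neg at hc
          exact h (Prod.ext hc.1 hc.2)))⟩)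
  left_inv := by
    rintro ⟨g, ⟨⟨a, b⟩, hab⟩⟩
    have hgcd : Int.gcd ((g:ℤ) * a) ((g:ℤ) * b) = (g : ℕ) := by
      rw [Int.gcd_mul_left, hab]
      simp
    have hg : (g : ℤ) ≠ 0 := by exact_mod_cast g.ne_zero
    ext
    · simp only [hgcd]; rfl
    · simp only [hgcd]
      push_cast
      exact Int.mul_ediv_cancel_left a hg
    · simp only [hgcd]
      push_cast
      exact Int.mul_ediv_cancel_left b hg
  right_inv := by
    rintro ⟨⟨a, b⟩, h⟩
    ext
    · simp only
      exact Int.mul_ediv_cancel' (Int.gcd_dvd_left _ _)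
    · simp only
      exact Int.mul_ediv_cancel' (Int.gcd_dvd_right _ _)


set_option maxHeartbeats 1000000 in
/-- Lemma (Euler-type factorization): for K = ℚ(√d) imaginary quadratic,
    m ∈ ℤ, k ≥ 1 and Re(s) > 1, all series converge absolutely and
    ζ(2s, χ_k) · Σ_{α ∈ V} (α/ᾱ)^m χ_k(α) N(α)^{-s}
      = Σ_{0 ≠ γ ∈ O} (γ/γ̄)^m χ_k(γ) N(γ)^{-s}. -/
theorem zeta_chi_mul_visible_sum_eq
    (d : ℤ) (hd : Squarefree d) (hdneg : d < 0)
    (m : ℤ) (k : ℕ) (hk : 0 < k) (s : ℂ) (hs : 1 < s.re) :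
    Summable (fun n : ℕ+ =>
      ‖(if Nat.gcd (n : ℕ) k = 1 then (1 : ℂ) else 0) * (n : ℂ) ^ (-(2 * s))‖) ∧
    Summable (fun p : {p : ℤ × ℤ // Int.gcd p.1 p.2 = 1} =>
      ‖(elt d p.1.1 p.1.2 / eltBar d p.1.1 p.1.2) ^ m *
        (if Int.gcd (Nrm d p.1.1 p.1.2) k = 1 then (1 : ℂ) else 0) *
        ((Nrm d p.1.1 p.1.2 : ℂ)) ^ (-s)‖) ∧
    Summable (fun p : {p : ℤ × ℤ // p ≠ (0, 0)} =>
      ‖(elt d p.1.1 p.1.2 / eltBar d p.1.1 p.1.2) ^ m *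
        (if Int.gcd (Nrm d p.1.1 p.1.2) k = 1 then (1 : ℂ) else 0) *
        ((Nrm d p.1.1 p.1.2 : ℂ)) ^ (-s)‖) ∧
    (∑' n : ℕ+, (if Nat.gcd (n : ℕ) k = 1 then (1 : ℂ) else 0) * (n : ℂ) ^ (-(2 * s))) *
      (∑' p : {p : ℤ × ℤ // Int.gcd p.1 p.2 = 1},
        (elt d p.1.1 p.1.2 / eltBar d p.1.1 p.1.2) ^ m *
          (if Int.gcd (Nrm d p.1.1 p.1.2) k = 1 then (1 : ℂ) else 0) *
          ((Nrm d p.1.1 p.1.2 : ℂ)) ^ (-s)) =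
    ∑' p : {p : ℤ × ℤ // p ≠ (0, 0)},
      (elt d p.1.1 p.1.2 / eltBar d p.1.1 p.1.2) ^ m *
        (if Int.gcd (Nrm d p.1.1 p.1.2) k = 1 then (1 : ℂ) else 0) *
        ((Nrm d p.1.1 p.1.2 : ℂ)) ^ (-s) := by
  set σ := s.re with hσ
  have hσpos : (0:ℝ) < σ := by linarith
  -- summability 1
  have hS1 : Summable (fun n : ℕ+ =>
      ‖(if Nat.gcd (n : ℕ) k = 1 then (1 : ℂ) else 0) * (n : ℂ) ^ (-(2 * s))‖) := by
    have hb : Summable (fun n : ℕ+ => ((n : ℕ) : ℝ) ^ (-(2 * σ))) := by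
      have : Summable (fun n : ℕ => (n : ℝ) ^ (-(2 * σ))) :=
        Real.summable_nat_rpow.mpr (by linarith)
      exact this.comp_injective PNat.coe_injective
    refine Summable.of_nonneg_of_le (fun _ => norm_nonneg _) ?_ hb
    intro n
    rw [norm_mul]
    have hcp : ‖(n : ℂ) ^ (-(2 * s))‖ = ((n : ℕ) : ℝ) ^ (-(2 * σ)) := by
      have h1 : ((n : ℕ+) : ℂ) = ((((n : ℕ) : ℝ)) : ℂ) := by push_cast; rfl
      rw [h1,
        Complex.norm_cpow_eq_rpow_re_of_pos (by exact_mod_cast n.pos) _]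
      congr 1
      simp [hσ]
    rw [hcp]
    have : ‖(if Nat.gcd (n : ℕ) k = 1 then (1:ℂ) else 0)‖ ≤ 1 := by split_ifs <;> simp
    nlinarith [Real.rpow_pos_of_pos (by exact_mod_cast n.pos : (0:ℝ) < ((n:ℕ):ℝ)) (-(2*σ)),
      norm_nonneg (if Nat.gcd (n : ℕ) k = 1 then (1:ℂ) else 0)]
  -- summability 3
  have hS3 : Summable (fun p : {p : ℤ × ℤ // p ≠ (0, 0)} => ‖trm d k m s p.1‖) := by
    have hbig : Summable (fun x : Fin 2 → ℤ => 2 ^ σ * ‖x‖ ^ (-(2 * σ))) :=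
      (EisensteinSeries.summable_one_div_norm_rpow (by linarith)).mul_left _
    have hinj : Function.Injective
        (fun p : {p : ℤ × ℤ // p ≠ (0, 0)} => ![p.1.1, p.1.2]) := by
      intro p q h
      have h0 := congrFun h 0
      have h1 := congrFun h 1
      simp only [Matrix.cons_val_zero, Matrix.cons_val_one, Matrix.head_cons] at h0 h1
      exact Subtype.ext (Prod.ext h0 h1)
    refine Summable.of_nonneg_of_le (fun _ => norm_nonneg _) ?_ (hbig.comp_injective hinj)
    intro p
    have hne : ¬(p.1.1 = 0 ∧ p.1.2 = 0) := fun hc => p.2 (Prod.ext hc.1 hc.2)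
    have := norm_trm_le d hdneg k m s hσpos p.1.1 p.1.2 hne
    simpa using this
  -- summability 2
  have hS2 : Summable (fun p : {p : ℤ × ℤ // Int.gcd p.1 p.2 = 1} => ‖trm d k m s p.1‖) := by
    have hinj : Function.Injective
        (fun p : {p : ℤ × ℤ // Int.gcd p.1 p.2 = 1} =>
          (⟨p.1, pair_ne_zero p.2⟩ : {p : ℤ × ℤ // p ≠ (0, 0)})) := by
      intro p q h
      exact Subtype.ext (congrArg (fun x : {p : ℤ × ℤ // p ≠ (0, 0)} => x.1) h)
    have h2 := hS3.comp_injective hinj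
    exact h2.congr (fun p => rfl)
  refine ⟨hS1, hS2, hS3, ?_⟩
  -- the identity
  show (∑' n : ℕ+, (if Nat.gcd (n : ℕ) k = 1 then (1 : ℂ) else 0) * (n : ℂ) ^ (-(2 * s))) *
      (∑' p : {p : ℤ × ℤ // Int.gcd p.1 p.2 = 1}, trm d k m s p.1) =
    ∑' p : {p : ℤ × ℤ // p ≠ (0, 0)}, trm d k m s p.1
  rw [tsum_mul_tsum_of_summable_norm hS1 hS2]
  rw [← pairEquiv.tsum_eq (fun p : {p : ℤ × ℤ // p ≠ (0, 0)} => trm d k m s p.1)]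
  refine tsum_congr fun z => ?_
  obtain ⟨g, ⟨⟨a, b⟩, hab⟩⟩ := z
  exact (trm_mul d hdneg k m s g a b (coprime_ne_zero hab)).symm
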